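/- Let H be a unital RKHA on X and Y ⊆ X. Let I_Y = {f ∈ H : f|_Y = 0}, a closed ideal. Then the restriction RKHA H(Y) ≅ H/I_Y (Hilbert space quotient) and the Banach algebra quotient norm ‖[f]‖_B = inf_{g∈[f]} ‖M_g‖_op are equivalent norms: (1/C)‖f‖_{H(Y)} ≤ ‖[f]‖_B ≤ C‖f‖_{H(Y)} where C = max(‖1‖_H, ‖Δ‖_op). -/

import Mathlib

open scoped ComplexInnerProductSpace

noncomputable section

/-- An abstract Hilbert tensor product structure: a bilinear map `tmul` whose
elementary tensors satisfy the inner product identity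
`⟪a ⊗ b, c ⊗ d⟫ = ⟪a, c⟫ ⟪b, d⟫` and whose elementary tensors span a dense subspace. -/
structure TensorLike (H K HT : Type*) [NormedAddCommGroup H] [InnerProductSpace ℂ H]
    [NormedAddCommGroup K] [InnerProductSpace ℂ K]
    [NormedAddCommGroup HT] [InnerProductSpace ℂ HT] where
  tmul : H →ₗ[ℂ] K →ₗ[ℂ] HT
  inner_tmul : ∀ (a c : H) (b d : K),
    ⟪tmul a b, tmul c d⟫ = ⟪a, c⟫ * ⟪b, d⟫
  dense_span : Dense (Submodule.span ℂ (Set.range fun p : H × K => tmul p.1 p.2) : Set HT)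

/-- for a unital RKHA `H` on `X` and `Y ⊆ X`, the quotient Hilbert norm
`‖[f]‖ = inf {‖g‖ : g ≡ f on Y}` (the norm of the restriction RKHS `H(Y) ≅ H/I_Y`) and
the quotient Banach algebra norm `‖[f]‖_B = inf {‖M_g‖ : g ≡ f on Y}` are equivalent:
`(1/C)‖[f]‖ ≤ ‖[f]‖_B ≤ C‖[f]‖` with `C = max ‖1‖ ‖Δ‖`. -/
theorem stmt_18 {X H HT : Type*} [Nonempty X]
    [NormedAddCommGroup H] [InnerProductSpace ℂ H] [CompleteSpace H]
    [NormedAddCommGroup HT] [InnerProductSpace ℂ HT] [CompleteSpace HT]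
    (k : X → H) (hk : Dense (Submodule.span ℂ (Set.range k) : Set H))
    (T : TensorLike H H HT) (Δ : H →L[ℂ] HT)
    (hΔ : ∀ x, Δ (k x) = T.tmul (k x) (k x))
    (one : H) (hone : ∀ x, ⟪k x, one⟫ = 1)
    (M : H → H →L[ℂ] H)
    (hM : ∀ (g h : H) (x : X), ⟪k x, M g h⟫ = ⟪k x, g⟫ * ⟪k x, h⟫)
    (Y : Set X) (f : H) :
    (1 / max ‖one‖ ‖Δ‖) *
        sInf {r : ℝ | ∃ g : H, (∀ y ∈ Y, ⟪k y, g⟫ = ⟪k y, f⟫) ∧ r = ‖g‖} ≤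
      sInf {r : ℝ | ∃ g : H, (∀ y ∈ Y, ⟪k y, g⟫ = ⟪k y, f⟫) ∧ r = ‖M g‖} ∧
    sInf {r : ℝ | ∃ g : H, (∀ y ∈ Y, ⟪k y, g⟫ = ⟪k y, f⟫) ∧ r = ‖M g‖} ≤
      max ‖one‖ ‖Δ‖ *
        sInf {r : ℝ | ∃ g : H, (∀ y ∈ Y, ⟪k y, g⟫ = ⟪k y, f⟫) ∧ r = ‖g‖} := by
  classical
  set C := max ‖one‖ ‖Δ‖ with hCdef
  have hx0 : Nonempty X := ‹_›
  have hone0 : one ≠ 0 := by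
    intro h
    have := hone (Classical.arbitrary X)
    rw [h, inner_zero_right] at this
    exact one_ne_zero this.symm
  have honepos : (0:ℝ) < ‖one‖ := norm_pos_iff.2 hone0
  have hC : (0:ℝ) < C := lt_of_lt_of_le honepos (le_max_left _ _)
  -- extensionality from density
  have hext : ∀ a b : H, (∀ x, ⟪k x, a⟫ = ⟪k x, b⟫) → a = b := by
    intro a b hab
    have hw : ∀ u ∈ Submodule.span ℂ (Set.range k), ⟪u, a - b⟫ = 0 := by
      intro u hu
      induction hu using Submodule.span_induction with
      | mem u hu => obtain ⟨x, rfl⟩ := hu; simp [inner_sub_right, hab x]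
      | zero => simp
      | add u v _ _ h1 h2 => rw [inner_add_left, h1, h2, add_zero]
      | smul c u _ h1 => rw [inner_smul_left, h1, mul_zero]
    have hmem : a - b ∈ (Submodule.span ℂ (Set.range k))ᗮ :=
      (Submodule.mem_orthogonal _ _).2 hw
    rw [Submodule.dense_iff_topologicalClosure_eq_top,
      Submodule.topologicalClosure_eq_top_iff] at hk
    rw [hk, Submodule.mem_bot, sub_eq_zero] at hmem
    exact hmem
  -- M g h is the adjoint of Δ applied to g ⊗ h
  have hMeq : ∀ g h : H, M g h = (ContinuousLinearMap.adjoint Δ) (T.tmul g h) := by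
    intro g h
    refine hext _ _ fun x => ?_
    rw [hM, ContinuousLinearMap.adjoint_inner_right, hΔ, T.inner_tmul]
  -- norm of elementary tensors
  have htnorm : ∀ g h : H, ‖T.tmul g h‖ = ‖g‖ * ‖h‖ := by
    intro g h
    have h1 := T.inner_tmul g g h h
    have h2 := congrArg norm h1
    rw [norm_mul, ← inner_self_re_eq_norm, ← inner_self_re_eq_norm,
      ← inner_self_re_eq_norm, inner_self_eq_norm_mul_norm,
      inner_self_eq_norm_mul_norm, inner_self_eq_norm_mul_norm] at h2
    have h3 : ‖T.tmul g h‖ * ‖T.tmul g h‖ = (‖g‖ * ‖h‖) * (‖g‖ * ‖h‖) := by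
      rw [h2]; ring
    nlinarith [norm_nonneg (T.tmul g h), mul_nonneg (norm_nonneg g) (norm_nonneg h)]
  -- operator norm bound : ‖M g‖ ≤ ‖Δ‖ * ‖g‖
  have hMle : ∀ g : H, ‖M g‖ ≤ ‖Δ‖ * ‖g‖ := by
    intro g
    refine ContinuousLinearMap.opNorm_le_bound _
      (mul_nonneg (norm_nonneg _) (norm_nonneg _)) fun h => ?_
    rw [hMeq]
    calc ‖(ContinuousLinearMap.adjoint Δ) (T.tmul g h)‖
        ≤ ‖ContinuousLinearMap.adjoint Δ‖ * ‖T.tmul g h‖ :=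
          ContinuousLinearMap.le_opNorm _ _
      _ = ‖Δ‖ * (‖g‖ * ‖h‖) := by
          rw [LinearIsometryEquiv.norm_map, htnorm]
      _ = ‖Δ‖ * ‖g‖ * ‖h‖ := by ring
  -- lower bound : ‖g‖ ≤ ‖one‖ * ‖M g‖
  have hgle : ∀ g : H, ‖g‖ ≤ ‖one‖ * ‖M g‖ := by
    intro g
    have hMone : M g one = g := hext _ _ fun x => by rw [hM, hone, mul_one]
    calc ‖g‖ = ‖M g one‖ := by rw [hMone]
      _ ≤ ‖M g‖ * ‖one‖ := ContinuousLinearMap.le_opNorm _ _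
      _ = ‖one‖ * ‖M g‖ := mul_comm _ _
  set S1 := {r : ℝ | ∃ g : H, (∀ y ∈ Y, ⟪k y, g⟫ = ⟪k y, f⟫) ∧ r = ‖g‖} with hS1
  set S2 := {r : ℝ | ∃ g : H, (∀ y ∈ Y, ⟪k y, g⟫ = ⟪k y, f⟫) ∧ r = ‖M g‖} with hS2
  have hS1ne : S1.Nonempty := ⟨‖f‖, f, fun y _ => rfl, rfl⟩
  have hS2ne : S2.Nonempty := ⟨‖M f‖, f, fun y _ => rfl, rfl⟩
  have hS1bdd : BddBelow S1 := ⟨0, by rintro r ⟨g, -, rfl⟩; exact norm_nonneg _⟩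
  have hS2bdd : BddBelow S2 := ⟨0, by rintro r ⟨g, -, rfl⟩; exact norm_nonneg _⟩
  constructor
  · refine le_csInf hS2ne ?_
    rintro r ⟨g, hg, rfl⟩
    have h1 : sInf S1 ≤ ‖g‖ := csInf_le hS1bdd ⟨g, hg, rfl⟩
    have h2 : ‖g‖ ≤ C * ‖M g‖ :=
      (hgle g).trans (mul_le_mul_of_nonneg_right (le_max_left _ _) (norm_nonneg _))
    rw [one_div, inv_mul_le_iff₀ hC]
    exact h1.trans h2
  · rw [← div_le_iff₀' hC]
    refine le_csInf hS1ne ?_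
    rintro r ⟨g, hg, rfl⟩
    rw [div_le_iff₀' hC]
    have h1 : sInf S2 ≤ ‖M g‖ := csInf_le hS2bdd ⟨g, hg, rfl⟩
    have h2 : ‖M g‖ ≤ C * ‖g‖ :=
      (hMle g).trans (mul_le_mul_of_nonneg_right (le_max_right _ _) (norm_nonneg _))
    exact h1.trans h2
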